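/- There is a constant C such that for all t ≥ 0 and all f ∈ H²(ℝ²) with ⟨t-r⟩∂^α f ∈ L² for |α| ≤ 2: ⟨t⟩ ‖f‖_{L^∞({|x| ≤ ⟨t/2⟩})} ≤ C ∑_{|α| ≤ 2} ‖⟨t-|x|⟩ ∂^α f‖_{L²(ℝ²)}. -/

import Mathlib

open MeasureTheory

/-- `⟨σ⟩ = √(1+σ²)`. -/
noncomputable def jap (σ : ℝ) : ℝ := Real.sqrt (1 + σ ^ 2)

/-- Partial derivative `∂_i f` on `ℝ²`. -/
noncomputable def pderiv2 (i : Fin 2) (f : EuclideanSpace ℝ (Fin 2) → ℝ)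
    (x : EuclideanSpace ℝ (Fin 2)) : ℝ :=
  fderiv ℝ f x (EuclideanSpace.single i 1)

local notation "E2" => EuclideanSpace ℝ (Fin 2)



lemma one_le_jap (σ : ℝ) : 1 ≤ jap σ := by
  have h : (1:ℝ) = Real.sqrt 1 := (Real.sqrt_one).symm
  rw [jap, h]
  exact Real.sqrt_le_sqrt (by nlinarith)

lemma jap_pos (σ : ℝ) : 0 < jap σ := lt_of_lt_of_le one_pos (one_le_jap σ)

lemma jap_le (σ : ℝ) : jap σ ≤ 1 + |σ| := by
  rw [jap]
  have : (1:ℝ) + σ^2 ≤ (1 + |σ|)^2 := by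
    have := abs_nonneg σ
    have := sq_abs σ
    nlinarith
  calc Real.sqrt (1 + σ^2) ≤ Real.sqrt ((1+|σ|)^2) := Real.sqrt_le_sqrt this
    _ = abs (1 + |σ|) := Real.sqrt_sq_eq_abs _
    _ = 1 + |σ| := abs_of_nonneg (by positivity)

lemma abs_le_jap (σ : ℝ) : |σ| ≤ jap σ := by
  rw [jap]
  calc |σ| = Real.sqrt (σ^2) := (Real.sqrt_sq_eq_abs σ).symm
    _ ≤ _ := Real.sqrt_le_sqrt (by nlinarith)

lemma jap_big {t r : ℝ} (ht : 0 ≤ t) (hr : r ≤ jap (t/2) + 2) : jap t ≤ 13 * jap (t - r) := by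
  rcases le_or_gt t 12 with h | h
  · have h1 : jap t ≤ 1 + t := by simpa [abs_of_nonneg ht] using jap_le t
    have h2 : 1 ≤ jap (t - r) := one_le_jap _
    nlinarith
  · have h1 : jap (t/2) ≤ 1 + t/2 := by
      have := jap_le (t/2); rwa [abs_of_nonneg (by linarith)] at this
    have h2 : t - r ≤ jap (t - r) := le_trans (le_abs_self _) (abs_le_jap _)
    have h3 : jap t ≤ 1 + t := by simpa [abs_of_nonneg ht] using jap_le t
    nlinarith



lemma ftc1 {g : E2 → ℝ} (hg : ContDiff ℝ 1 g) (y v : E2) (a : ℝ) :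
    g (y + a • v) = g y + ∫ s in (0:ℝ)..a, fderiv ℝ g (y + s • v) v := by
  have hd : ∀ s : ℝ, HasDerivAt (fun s : ℝ => g (y + s • v)) (fderiv ℝ g (y + s • v) v) s := by
    intro s
    have h1 : HasDerivAt (fun s : ℝ => y + s • v) v s := by
      simpa using ((hasDerivAt_id s).smul_const v).const_add y
    exact ((hg.differentiable one_ne_zero) (y + s • v)).hasFDerivAt.comp_hasDerivAt s h1
  have hc : Continuous fun s : ℝ => fderiv ℝ g (y + s • v) v := by
    refine Continuous.clm_apply ?_ continuous_const
    exact (hg.continuous_fderiv one_ne_zero).comp (by continuity)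
  have := intervalIntegral.integral_eq_sub_of_hasDerivAt (f := fun s : ℝ => g (y + s • v))
    (fun s _ => hd s) (hc.intervalIntegrable 0 a)
  simp only [zero_smul, add_zero] at this
  rw [this]; ring




lemma continuous_jap : Continuous jap := by
  unfold jap; fun_prop

lemma square_bound {t : ℝ} (ht : 0 ≤ t) (κ : ℝ × ℝ ≃ᵐ E2)
    (hκ : MeasurePreserving κ (volume : Measure (ℝ×ℝ)) (volume : Measure E2))
    (hκc : Continuous fun p : ℝ × ℝ => (κ p : E2))
    (hκn : ∀ p : ℝ × ℝ, p.1 ∈ Set.Icc (0:ℝ) 1 → p.2 ∈ Set.Icc (0:ℝ) 1 →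
      ‖(κ p : E2)‖ ≤ jap (t/2) + 2)
    (h : E2 → ℝ) (hc : Continuous h)
    (hi : Integrable (fun y : E2 => (jap (t - ‖y‖) * h y) ^ 2)) :
    ∫ s in (0:ℝ)..1, ∫ u in (0:ℝ)..1, |h (κ (s, u))|
      ≤ 13 / jap t * Real.sqrt (∫ y : E2, (jap (t - ‖y‖) * h y) ^ 2) := by
  set Q : Set (ℝ × ℝ) := Set.Ioc (0:ℝ) 1 ×ˢ Set.Ioc (0:ℝ) 1 with hQ
  set G : ℝ × ℝ → ℝ := fun p => jap (t - ‖(κ p : E2)‖) * |h (κ p)| with hG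
  have hGc : Continuous G := by
    apply Continuous.mul
    · exact continuous_jap.comp (continuous_const.sub (hκc.norm))
    · exact (hc.comp hκc).abs
  have hGnn : ∀ p, 0 ≤ G p := fun p => mul_nonneg (jap_pos _).le (abs_nonneg _)
  -- pointwise bound on the square
  have hpt : ∀ p : ℝ × ℝ, p.1 ∈ Set.Icc (0:ℝ) 1 → p.2 ∈ Set.Icc (0:ℝ) 1 →
      |h (κ p)| ≤ 13 / jap t * G p := by
    intro p h1 h2
    have hb := jap_big ht (hκn p h1 h2)
    have hj := jap_pos t
    rw [hG, div_mul_eq_mul_div, le_div_iff₀ hj]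
    calc |h (κ p)| * jap t ≤ |h (κ p)| * (13 * jap (t - ‖(κ p : E2)‖)) := by
          exact mul_le_mul_of_nonneg_left hb (abs_nonneg _)
      _ = 13 * (jap (t - ‖(κ p : E2)‖) * |h (κ p)|) := by ring
  -- step: iterated integral bounded by iterated integral of (13/japt) * G
  have hu1 : Continuous (Function.uncurry fun s u : ℝ => |h (κ (s, u))|) := by
    have : (Function.uncurry fun s u : ℝ => |h (κ (s, u))|) = fun p : ℝ × ℝ => |h (κ p)| := rfl
    rw [this]; exact (hc.comp hκc).abs
  have hu2 : Continuous (Function.uncurry fun s u : ℝ => 13 / jap t * G (s, u)) := by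
    have : (Function.uncurry fun s u : ℝ => 13 / jap t * G (s, u))
        = fun p : ℝ × ℝ => 13 / jap t * G p := rfl
    rw [this]; exact continuous_const.mul hGc
  have step1 : ∫ s in (0:ℝ)..1, ∫ u in (0:ℝ)..1, |h (κ (s, u))|
      ≤ ∫ s in (0:ℝ)..1, ∫ u in (0:ℝ)..1, 13 / jap t * G (s, u) := by
    apply intervalIntegral.integral_mono_on zero_le_one
    · exact (intervalIntegral.continuous_parametric_intervalIntegral_of_continuous'
        hu1 0 1).intervalIntegrable _ _
    · exact (intervalIntegral.continuous_parametric_intervalIntegral_of_continuous'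
        hu2 0 1).intervalIntegrable _ _
    · intro s hs
      apply intervalIntegral.integral_mono_on zero_le_one
      · exact (hu1.comp (Continuous.prodMk_right s)).intervalIntegrable _ _
      · exact (hu2.comp (Continuous.prodMk_right s)).intervalIntegrable _ _
      · intro u hu
        exact hpt (s, u) hs hu
  have step2 : ∫ s in (0:ℝ)..1, ∫ u in (0:ℝ)..1, 13 / jap t * G (s, u)
      = 13 / jap t * ∫ s in (0:ℝ)..1, ∫ u in (0:ℝ)..1, G (s, u) := by
    simp_rw [intervalIntegral.integral_const_mul]
  -- integrability of G and G² on the square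
  have hsub : Q ⊆ Set.Icc (0:ℝ) 1 ×ˢ Set.Icc (0:ℝ) 1 :=
    Set.prod_mono Set.Ioc_subset_Icc_self Set.Ioc_subset_Icc_self
  have hIntQ : IntegrableOn G Q volume := by
    refine IntegrableOn.mono_set ?_ hsub
    exact (hGc.continuousOn).integrableOn_compact' (isCompact_Icc.prod isCompact_Icc)
      (measurableSet_Icc.prod measurableSet_Icc)
  have hIntQ2 : IntegrableOn (fun p => G p ^ 2) Q volume := by
    refine IntegrableOn.mono_set ?_ hsub
    exact ((hGc.pow 2).continuousOn).integrableOn_compact' (isCompact_Icc.prod isCompact_Icc)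
      (measurableSet_Icc.prod measurableSet_Icc)
  have step3 : ∫ s in (0:ℝ)..1, ∫ u in (0:ℝ)..1, G (s, u) = ∫ p in Q, G p := by
    have hinner : ∀ s : ℝ, (∫ u in (0:ℝ)..1, G (s, u)) = ∫ u in Set.Ioc (0:ℝ) 1, G (s, u) :=
      fun s => intervalIntegral.integral_of_le zero_le_one
    rw [intervalIntegral.integral_of_le zero_le_one]
    simp_rw [hinner]
    rw [hQ, Measure.volume_eq_prod, setIntegral_prod]
    rw [← Measure.volume_eq_prod]
    exact hIntQ.mono_measure (le_of_eq (by rw [Measure.volume_eq_prod]))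
  -- volume of the square is 1
  have hvolQ : (volume : Measure (ℝ × ℝ)) Q = 1 := by
    rw [hQ, Measure.volume_eq_prod, Measure.prod_prod, Real.volume_Ioc]
    norm_num
  haveI hfin : IsFiniteMeasure ((volume : Measure (ℝ × ℝ)).restrict Q) := by
    constructor
    rw [Measure.restrict_apply_univ, hvolQ]
    exact ENNReal.one_lt_top
  -- Cauchy-Schwarz on Q
  have hconj : (2:ℝ).HolderConjugate 2 := by constructor <;> norm_num
  have hmemG : MemLp G (ENNReal.ofReal (2:ℝ)) ((volume : Measure (ℝ × ℝ)).restrict Q) := by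
    have h2 : ENNReal.ofReal (2:ℝ) = 2 := by norm_num
    rw [h2]
    exact (memLp_two_iff_integrable_sq hGc.aestronglyMeasurable.restrict).2 hIntQ2
  have hmem1 : MemLp (fun _ : ℝ × ℝ => (1:ℝ)) (ENNReal.ofReal (2:ℝ))
      ((volume : Measure (ℝ × ℝ)).restrict Q) := memLp_const 1
  have hold := integral_mul_le_Lp_mul_Lq_of_nonneg hconj
    (Filter.Eventually.of_forall hGnn) (Filter.Eventually.of_forall fun _ => zero_le_one) hmemG hmem1
  have hCS : ∫ p in Q, G p ≤ Real.sqrt (∫ p in Q, G p ^ 2) := by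
    have e1 : ∫ p in Q, G p * 1 = ∫ p in Q, G p := by simp
    have e2 : ∫ a in Q, (fun _ : ℝ × ℝ => (1:ℝ)) a ^ (2:ℝ) = 1 := by
      simp [Measure.real, hvolQ]
    have e3 : ∫ a in Q, G a ^ (2:ℝ) = ∫ p in Q, G p ^ 2 := by
      apply integral_congr_ae
      filter_upwards with p
      rw [show ((2:ℝ) = ((2:ℕ):ℝ)) by norm_num, Real.rpow_natCast]
    rw [e1, e2, e3] at hold
    calc ∫ p in Q, G p ≤ (∫ p in Q, G p ^ 2) ^ ((1:ℝ)/2) * 1 ^ ((1:ℝ)/2) := hold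
      _ = Real.sqrt (∫ p in Q, G p ^ 2) := by
          rw [Real.one_rpow, mul_one, Real.sqrt_eq_rpow]
  -- change of variables
  have hint2 : Integrable (fun p : ℝ × ℝ => (jap (t - ‖(κ p : E2)‖) * h (κ p)) ^ 2) volume :=
    (hκ.integrable_comp_emb κ.measurableEmbedding).2 hi
  have hG2eq : ∀ p, G p ^ 2 = (jap (t - ‖(κ p : E2)‖) * h (κ p)) ^ 2 := by
    intro p; rw [hG]; simp only [mul_pow, sq_abs]
  have hchg : ∫ p in Q, G p ^ 2 ≤ ∫ y : E2, (jap (t - ‖y‖) * h y) ^ 2 := by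
    calc ∫ p in Q, G p ^ 2
        = ∫ p in Q, (jap (t - ‖(κ p : E2)‖) * h (κ p)) ^ 2 := by
          exact setIntegral_congr_fun ((measurableSet_Ioc.prod measurableSet_Ioc)) fun p _ => hG2eq p
      _ ≤ ∫ p : ℝ × ℝ, (jap (t - ‖(κ p : E2)‖) * h (κ p)) ^ 2 :=
          setIntegral_le_integral hint2 (Filter.Eventually.of_forall fun p => sq_nonneg _)
      _ = ∫ y : E2, (jap (t - ‖y‖) * h y) ^ 2 :=
          hκ.integral_comp κ.measurableEmbedding (fun y : E2 => (jap (t - ‖y‖) * h y) ^ 2)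
  have hj : 0 ≤ 13 / jap t := div_nonneg (by norm_num) (jap_pos t).le
  calc ∫ s in (0:ℝ)..1, ∫ u in (0:ℝ)..1, |h (κ (s, u))|
      ≤ 13 / jap t * ∫ s in (0:ℝ)..1, ∫ u in (0:ℝ)..1, G (s, u) := by rw [← step2]; exact step1
    _ = 13 / jap t * ∫ p in Q, G p := by rw [step3]
    _ ≤ 13 / jap t * Real.sqrt (∫ p in Q, G p ^ 2) := by
        exact mul_le_mul_of_nonneg_left hCS hj
    _ ≤ 13 / jap t * Real.sqrt (∫ y : E2, (jap (t - ‖y‖) * h y) ^ 2) := by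
        exact mul_le_mul_of_nonneg_left (Real.sqrt_le_sqrt hchg) hj



noncomputable def chi (x : E2) : ℝ × ℝ ≃ᵐ E2 :=
  (MeasurableEquiv.subLeft (x 0, x 1)).trans
    (MeasurableEquiv.finTwoArrow.symm.trans (MeasurableEquiv.toLp 2 (Fin 2 → ℝ)))

lemma chi_preserving (x : E2) :
    MeasurePreserving (chi x) (volume : Measure (ℝ × ℝ)) (volume : Measure E2) := by
  have h1 : MeasurePreserving (MeasurableEquiv.subLeft (x 0, x 1))
      (volume : Measure (ℝ × ℝ)) volume := by
    have := Measure.measurePreserving_sub_left (volume : Measure (ℝ × ℝ)) (x 0, x 1)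
    convert this using 1
    rfl
  have h2 : MeasurePreserving (MeasurableEquiv.finTwoArrow.symm : ℝ × ℝ ≃ᵐ (Fin 2 → ℝ))
      volume volume := (volume_preserving_finTwoArrow ℝ).symm _
  have h3 : MeasurePreserving (MeasurableEquiv.toLp 2 (Fin 2 → ℝ))
      volume (volume : Measure E2) :=
    (EuclideanSpace.volume_preserving_symm_measurableEquiv_toLp (Fin 2)).symm
  have : MeasurePreserving
      (((MeasurableEquiv.toLp 2 (Fin 2 → ℝ)) : (Fin 2 → ℝ) ≃ᵐ E2) ∘
        (MeasurableEquiv.finTwoArrow.symm : ℝ × ℝ ≃ᵐ (Fin 2 → ℝ)) ∘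
        (MeasurableEquiv.subLeft (x 0, x 1) : ℝ × ℝ ≃ᵐ ℝ × ℝ))
      (volume : Measure (ℝ × ℝ)) (volume : Measure E2) :=
    h3.comp (h2.comp h1)
  convert this using 1
  rfl

lemma chi_apply (x : E2) (s u : ℝ) :
    (chi x (s, u) : E2)
      = x + s • (-(EuclideanSpace.single 0 (1:ℝ))) + u • (-(EuclideanSpace.single 1 (1:ℝ))) := by
  show ((MeasurableEquiv.subLeft (x 0, x 1)).trans
    (MeasurableEquiv.finTwoArrow.symm.trans (MeasurableEquiv.toLp 2 (Fin 2 → ℝ)))) (s, u) = _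
  ext i
  fin_cases i <;>
    simp [MeasurableEquiv.subLeft, EuclideanSpace.single_apply, PiLp.add_apply,
      PiLp.smul_apply, PiLp.neg_apply, MeasurableEquiv.finTwoArrow,
      MeasurableEquiv.coe_toLp, MeasurableEquiv.coe_mk, Equiv.subLeft_apply, sub_eq_add_neg] <;>
    exact sub_eq_add_neg _ _

set_option maxHeartbeats 800000 in
/-- Lemma 3.4: for `t ≥ 0` and `f ∈ H²(ℝ²)` with `⟨t-r⟩∂^α f ∈ L²` for `|α| ≤ 2`:
`⟨t⟩ ‖f‖_{L^∞(r ≤ ⟨t/2⟩)} ≤ C ∑_{|α| ≤ 2} ‖⟨t-r⟩ ∂^α f‖_{L²(ℝ²)}`. -/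
theorem interior_decay :
    ∃ C : ℝ, 0 < C ∧
      ∀ (t : ℝ) (f : EuclideanSpace ℝ (Fin 2) → ℝ), 0 ≤ t →
        ContDiff ℝ 2 f →
        Integrable (fun y : EuclideanSpace ℝ (Fin 2) => (jap (t - ‖y‖) * f y) ^ 2) →
        (∀ i : Fin 2, Integrable
          (fun y : EuclideanSpace ℝ (Fin 2) => (jap (t - ‖y‖) * pderiv2 i f y) ^ 2)) →
        (∀ i j : Fin 2, Integrable
          (fun y : EuclideanSpace ℝ (Fin 2) => (jap (t - ‖y‖) * pderiv2 i (pderiv2 j f) y) ^ 2)) →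
        ∀ x : EuclideanSpace ℝ (Fin 2), ‖x‖ ≤ jap (t / 2) →
          jap t * |f x| ≤
            C * (Real.sqrt (∫ y : EuclideanSpace ℝ (Fin 2), (jap (t - ‖y‖) * f y) ^ 2) +
                 (∑ i : Fin 2, Real.sqrt
                    (∫ y : EuclideanSpace ℝ (Fin 2), (jap (t - ‖y‖) * pderiv2 i f y) ^ 2)) +
                 ∑ i : Fin 2, ∑ j : Fin 2, Real.sqrt
                    (∫ y : EuclideanSpace ℝ (Fin 2),
                      (jap (t - ‖y‖) * pderiv2 i (pderiv2 j f) y) ^ 2)) := by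
  refine ⟨13, by norm_num, ?_⟩
  intro t f ht hf hi0 hi1 hi2 x hx
  set e0 : E2 := EuclideanSpace.single 0 (1:ℝ) with he0
  set e1 : E2 := EuclideanSpace.single 1 (1:ℝ) with he1
  set v0 : E2 := -e0 with hv0
  set v1 : E2 := -e1 with hv1
  set ψ : ℝ → ℝ → E2 := fun s u => x + s • v0 + u • v1 with hψdef
  -- smoothness / continuity facts
  have hf1 : ContDiff ℝ 1 f := hf.of_le (by norm_num)
  have hfc : Continuous f := hf.continuous
  have hfd1 : ContDiff ℝ 1 (fderiv ℝ f) := hf.fderiv_right (m := 1) (by norm_num)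
  set g1 : E2 → ℝ := fun z => fderiv ℝ f z v0 with hg1def
  have hg1CD : ContDiff ℝ 1 g1 := hfd1.clm_apply contDiff_const
  have hg1c : Continuous g1 := hg1CD.continuous
  have hD1c : Continuous (fun z : E2 => fderiv ℝ f z v1) :=
    (hfd1.clm_apply contDiff_const).continuous
  have hF2c : Continuous (fun z : E2 => fderiv ℝ g1 z v1) :=
    Continuous.clm_apply (hg1CD.continuous_fderiv one_ne_zero) continuous_const
  have hp0CD : ContDiff ℝ 1 (pderiv2 0 f) := by
    unfold pderiv2; exact hfd1.clm_apply contDiff_const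
  have hp0c : Continuous (pderiv2 0 f) := hp0CD.continuous
  have hp1c : Continuous (pderiv2 1 f) := by
    unfold pderiv2; exact (hfd1.clm_apply contDiff_const).continuous
  have hp10c : Continuous (pderiv2 1 (pderiv2 0 f)) := by
    unfold pderiv2
    exact Continuous.clm_apply (hp0CD.continuous_fderiv one_ne_zero) continuous_const
  -- relations with pderiv2
  have hD1abs : ∀ z : E2, |fderiv ℝ f z v1| = |pderiv2 1 f z| := by
    intro z; rw [hv1, map_neg]; rw [abs_neg]; rfl
  have hg1abs : ∀ z : E2, |g1 z| = |pderiv2 0 f z| := by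
    intro z; rw [hg1def]; simp only [hv0, map_neg, abs_neg]; rfl
  have hg1eq : g1 = fun z => -(pderiv2 0 f z) := by
    funext z; rw [hg1def]; simp only [hv0, map_neg]; rfl
  have hF2eq : ∀ z : E2, fderiv ℝ g1 z v1 = pderiv2 1 (pderiv2 0 f) z := by
    intro z
    rw [hg1eq]
    have : fderiv ℝ (fun z : E2 => -(pderiv2 0 f z)) z = -(fderiv ℝ (pderiv2 0 f) z) :=
      fderiv_neg
    rw [this, hv1, ContinuousLinearMap.neg_apply, map_neg, neg_neg]
    rfl
  -- chi facts
  have hχψ : ∀ s u : ℝ, (chi x (s, u) : E2) = ψ s u := by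
    intro s u; rw [chi_apply, hψdef]
  have hχc : Continuous fun p : ℝ × ℝ => (chi x p : E2) := by
    have : (fun p : ℝ × ℝ => (chi x p : E2)) = fun p : ℝ × ℝ => ψ p.1 p.2 := by
      funext p; exact hχψ p.1 p.2
    rw [this, hψdef]
    fun_prop
  have hψc : Continuous (fun p : ℝ × ℝ => ψ p.1 p.2) := by rw [hψdef]; fun_prop
  -- norm bound
  have hnorm : ∀ s u : ℝ, s ∈ Set.Icc (0:ℝ) 1 → u ∈ Set.Icc (0:ℝ) 1 →
      ‖ψ s u‖ ≤ jap (t/2) + 2 := by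
    intro s u hs hu
    have h1 : ‖ψ s u‖ ≤ ‖x‖ + ‖s • v0‖ + ‖u • v1‖ := by
      rw [hψdef]
      exact le_trans (norm_add_le _ _) (by gcongr; exact norm_add_le _ _)
    have hsv : ‖s • v0‖ ≤ 1 := by
      rw [norm_smul, hv0, norm_neg, he0, EuclideanSpace.norm_single]
      simp only [norm_one, mul_one, Real.norm_eq_abs]
      rw [abs_of_nonneg hs.1]; exact hs.2
    have huv : ‖u • v1‖ ≤ 1 := by
      rw [norm_smul, hv1, norm_neg, he1, EuclideanSpace.norm_single]
      simp only [norm_one, mul_one, Real.norm_eq_abs]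
      rw [abs_of_nonneg hu.1]; exact hu.2
    linarith
  have hnormχ : ∀ p : ℝ × ℝ, p.1 ∈ Set.Icc (0:ℝ) 1 → p.2 ∈ Set.Icc (0:ℝ) 1 →
      ‖(chi x p : E2)‖ ≤ jap (t/2) + 2 := by
    intro p h1 h2
    have : (chi x p : E2) = ψ p.1 p.2 := hχψ p.1 p.2
    rw [this]; exact hnorm _ _ h1 h2
  -- FTC identities
  have id1 : ∀ a : ℝ, f (x + a • v0) = f x + ∫ s in (0:ℝ)..a, g1 (x + s • v0) :=
    fun a => ftc1 hf1 x v0 a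
  have id2 : ∀ a b : ℝ, f (ψ a b)
      = f (x + a • v0) + ∫ u in (0:ℝ)..b, fderiv ℝ f (ψ a u) v1 :=
    fun a b => ftc1 hf1 (x + a • v0) v1 b
  have id3 : ∀ s b : ℝ, g1 (ψ s b)
      = g1 (x + s • v0) + ∫ u in (0:ℝ)..b, fderiv ℝ g1 (ψ s u) v1 :=
    fun s b => ftc1 hg1CD (x + s • v0) v1 b
  -- uncurried continuity facts
  have hU0 : Continuous (Function.uncurry fun a b : ℝ => |f (ψ a b)|) := by
    have : (Function.uncurry fun a b : ℝ => |f (ψ a b)|)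
        = fun p : ℝ × ℝ => |f (ψ p.1 p.2)| := rfl
    rw [this]; exact (hfc.comp hψc).abs
  have hU1 : Continuous (Function.uncurry fun a u : ℝ => |fderiv ℝ f (ψ a u) v1|) := by
    have : (Function.uncurry fun a u : ℝ => |fderiv ℝ f (ψ a u) v1|)
        = fun p : ℝ × ℝ => |fderiv ℝ f (ψ p.1 p.2) v1| := rfl
    rw [this]; exact (hD1c.comp hψc).abs
  have hUgsw : Continuous (Function.uncurry fun b s : ℝ => |g1 (ψ s b)|) := by
    have : (Function.uncurry fun b s : ℝ => |g1 (ψ s b)|)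
        = fun p : ℝ × ℝ => |g1 (ψ p.2 p.1)| := rfl
    rw [this]
    exact (hg1c.comp (hψc.comp (continuous_snd.prodMk continuous_fst))).abs
  have hUF : Continuous (Function.uncurry fun s u : ℝ => |fderiv ℝ g1 (ψ s u) v1|) := by
    have : (Function.uncurry fun s u : ℝ => |fderiv ℝ g1 (ψ s u) v1|)
        = fun p : ℝ × ℝ => |fderiv ℝ g1 (ψ p.1 p.2) v1| := rfl
    rw [this]; exact (hF2c.comp hψc).abs
  set S3 : ℝ := ∫ s in (0:ℝ)..1, ∫ u in (0:ℝ)..1, |fderiv ℝ g1 (ψ s u) v1| with hS3def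
  set Pq : ℝ → ℝ := fun a => ∫ b in (0:ℝ)..1, |f (ψ a b)| with hPdef
  set Qq : ℝ → ℝ := fun a => ∫ u in (0:ℝ)..1, |fderiv ℝ f (ψ a u) v1| with hQdef
  set Rq : ℝ := ∫ b in (0:ℝ)..1, ∫ s in (0:ℝ)..1, |g1 (ψ s b)| with hRdef
  have hPc : Continuous Pq :=
    intervalIntegral.continuous_parametric_intervalIntegral_of_continuous' hU0 0 1
  have hQc : Continuous Qq :=
    intervalIntegral.continuous_parametric_intervalIntegral_of_continuous' hU1 0 1
  have hInner : Continuous (fun b : ℝ => ∫ s in (0:ℝ)..1, |g1 (ψ s b)|) :=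
    intervalIntegral.continuous_parametric_intervalIntegral_of_continuous' hUgsw 0 1
  have hFinner : Continuous (fun s : ℝ => ∫ u in (0:ℝ)..1, |fderiv ℝ g1 (ψ s u) v1|) :=
    intervalIntegral.continuous_parametric_intervalIntegral_of_continuous' hUF 0 1
  -- key pointwise bound
  have keyab : ∀ a ∈ Set.Icc (0:ℝ) 1, ∀ b ∈ Set.Icc (0:ℝ) 1,
      |f x| ≤ |f (ψ a b)| + Qq a + (∫ s in (0:ℝ)..1, |g1 (ψ s b)|) + S3 := by
    intro a ha b hb
    have hfx : f x = f (ψ a b) - (∫ u in (0:ℝ)..b, fderiv ℝ f (ψ a u) v1)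
        - ∫ s in (0:ℝ)..a, g1 (x + s • v0) := by
      rw [id2 a b, id1 a]; ring
    have hD1bd : |∫ u in (0:ℝ)..b, fderiv ℝ f (ψ a u) v1| ≤ Qq a := by
      calc |∫ u in (0:ℝ)..b, fderiv ℝ f (ψ a u) v1|
          ≤ ∫ u in (0:ℝ)..b, |fderiv ℝ f (ψ a u) v1| :=
            intervalIntegral.abs_integral_le_integral_abs hb.1
        _ ≤ Qq a := by
            rw [hQdef]
            refine intervalIntegral.integral_mono_interval le_rfl hb.1 hb.2
              (Filter.Eventually.of_forall fun u => abs_nonneg _) ?_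
            exact (hU1.comp (Continuous.prodMk_right a)).intervalIntegrable _ _
    have hg1pt : ∀ s : ℝ, |g1 (x + s • v0)|
        ≤ |g1 (ψ s b)| + ∫ u in (0:ℝ)..1, |fderiv ℝ g1 (ψ s u) v1| := by
      intro s
      have h3 : g1 (x + s • v0)
          = g1 (ψ s b) - ∫ u in (0:ℝ)..b, fderiv ℝ g1 (ψ s u) v1 := by
        rw [id3 s b]; ring
      rw [h3, sub_eq_add_neg]
      calc |g1 (ψ s b) + -(∫ u in (0:ℝ)..b, fderiv ℝ g1 (ψ s u) v1)|
          ≤ |g1 (ψ s b)| + |∫ u in (0:ℝ)..b, fderiv ℝ g1 (ψ s u) v1| := by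
            rw [← abs_neg (∫ u in (0:ℝ)..b, fderiv ℝ g1 (ψ s u) v1)]
            exact abs_add_le _ _
        _ ≤ |g1 (ψ s b)| + ∫ u in (0:ℝ)..1, |fderiv ℝ g1 (ψ s u) v1| := by
            refine add_le_add_right ?_ _
            calc |∫ u in (0:ℝ)..b, fderiv ℝ g1 (ψ s u) v1|
                ≤ ∫ u in (0:ℝ)..b, |fderiv ℝ g1 (ψ s u) v1| :=
                  intervalIntegral.abs_integral_le_integral_abs hb.1
              _ ≤ _ := by
                  refine intervalIntegral.integral_mono_interval le_rfl hb.1 hb.2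
                    (Filter.Eventually.of_forall fun u => abs_nonneg _) ?_
                  exact (hUF.comp (Continuous.prodMk_right s)).intervalIntegrable _ _
    have hg1bd : |∫ s in (0:ℝ)..a, g1 (x + s • v0)|
        ≤ (∫ s in (0:ℝ)..1, |g1 (ψ s b)|) + S3 := by
      have hρc : Continuous (fun s : ℝ =>
          |g1 (ψ s b)| + ∫ u in (0:ℝ)..1, |fderiv ℝ g1 (ψ s u) v1|) := by
        refine Continuous.add ?_ hFinner
        exact (hg1c.comp ((hψc.comp (continuous_id.prodMk continuous_const)))).abs
      have hbase : Continuous (fun s : ℝ => |g1 (x + s • v0)|) := by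
        apply Continuous.abs; apply hg1c.comp; fun_prop
      calc |∫ s in (0:ℝ)..a, g1 (x + s • v0)|
          ≤ ∫ s in (0:ℝ)..a, |g1 (x + s • v0)| :=
            intervalIntegral.abs_integral_le_integral_abs ha.1
        _ ≤ ∫ s in (0:ℝ)..a,
            (|g1 (ψ s b)| + ∫ u in (0:ℝ)..1, |fderiv ℝ g1 (ψ s u) v1|) := by
            refine intervalIntegral.integral_mono_on ha.1 (hbase.intervalIntegrable _ _)
              (hρc.intervalIntegrable _ _) fun s _ => hg1pt s
        _ ≤ ∫ s in (0:ℝ)..1,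
            (|g1 (ψ s b)| + ∫ u in (0:ℝ)..1, |fderiv ℝ g1 (ψ s u) v1|) := by
            refine intervalIntegral.integral_mono_interval le_rfl ha.1 ha.2
              (Filter.Eventually.of_forall fun s => ?_) (hρc.intervalIntegrable _ _)
            exact add_nonneg (abs_nonneg _)
              (intervalIntegral.integral_nonneg zero_le_one fun u _ => abs_nonneg _)
        _ = (∫ s in (0:ℝ)..1, |g1 (ψ s b)|) + S3 := by
            have i1 : IntervalIntegrable (fun s : ℝ => |g1 (ψ s b)|) volume 0 1 := by
              apply Continuous.intervalIntegrable
              exact hUgsw.comp (Continuous.prodMk_right b)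
            have i2 : IntervalIntegrable
                (fun s : ℝ => ∫ u in (0:ℝ)..1, |fderiv ℝ g1 (ψ s u) v1|) volume 0 1 :=
              hFinner.intervalIntegrable _ _
            rw [intervalIntegral.integral_add i1 i2]
    have tri : |f x| ≤ |f (ψ a b)| + |∫ u in (0:ℝ)..b, fderiv ℝ f (ψ a u) v1|
        + |∫ s in (0:ℝ)..a, g1 (x + s • v0)| := by
      rw [hfx, sub_eq_add_neg, sub_eq_add_neg]
      calc |f (ψ a b) + -(∫ u in (0:ℝ)..b, fderiv ℝ f (ψ a u) v1)
            + -(∫ s in (0:ℝ)..a, g1 (x + s • v0))|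
          ≤ |f (ψ a b) + -(∫ u in (0:ℝ)..b, fderiv ℝ f (ψ a u) v1)|
            + |-(∫ s in (0:ℝ)..a, g1 (x + s • v0))| := abs_add_le _ _
        _ ≤ |f (ψ a b)| + |-(∫ u in (0:ℝ)..b, fderiv ℝ f (ψ a u) v1)|
            + |-(∫ s in (0:ℝ)..a, g1 (x + s • v0))| :=
            add_le_add_left (abs_add_le _ _) _
        _ = _ := by rw [abs_neg, abs_neg]
    linarith
  -- averaging in b
  have avgb : ∀ a ∈ Set.Icc (0:ℝ) 1, |f x| ≤ Pq a + Qq a + Rq + S3 := by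
    intro a ha
    have hΦc : Continuous
        (fun b : ℝ => |f (ψ a b)| + ∫ s in (0:ℝ)..1, |g1 (ψ s b)|) := by
      refine Continuous.add ?_ hInner
      exact (hfc.comp (hψc.comp (continuous_const.prodMk continuous_id))).abs
    have h1 : |f x| - Qq a - S3
        ≤ ∫ b in (0:ℝ)..1, (|f (ψ a b)| + ∫ s in (0:ℝ)..1, |g1 (ψ s b)|) := by
      have h2 : ∀ b ∈ Set.Icc (0:ℝ) 1,
          |f x| - Qq a - S3 ≤ |f (ψ a b)| + ∫ s in (0:ℝ)..1, |g1 (ψ s b)| := by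
        intro b hb; have := keyab a ha b hb; linarith
      calc |f x| - Qq a - S3 = ∫ _b in (0:ℝ)..1, (|f x| - Qq a - S3) := by simp
        _ ≤ _ := intervalIntegral.integral_mono_on zero_le_one
            intervalIntegrable_const (hΦc.intervalIntegrable _ _) h2
    have h3 : ∫ b in (0:ℝ)..1, (|f (ψ a b)| + ∫ s in (0:ℝ)..1, |g1 (ψ s b)|)
        = Pq a + Rq := by
      have i1 : IntervalIntegrable (fun b : ℝ => |f (ψ a b)|) volume 0 1 := by
        apply Continuous.intervalIntegrable
        exact hU0.comp (Continuous.prodMk_right a)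
      have i2 : IntervalIntegrable
          (fun b : ℝ => ∫ s in (0:ℝ)..1, |g1 (ψ s b)|) volume 0 1 :=
        hInner.intervalIntegrable _ _
      rw [intervalIntegral.integral_add i1 i2]
    linarith
  -- averaging in a
  have avga : |f x| ≤ (∫ a in (0:ℝ)..1, Pq a) + (∫ a in (0:ℝ)..1, Qq a) + Rq + S3 := by
    have h2 : ∀ a ∈ Set.Icc (0:ℝ) 1, |f x| - Rq - S3 ≤ Pq a + Qq a := by
      intro a ha; have := avgb a ha; linarith
    have h1 : |f x| - Rq - S3 ≤ ∫ a in (0:ℝ)..1, (Pq a + Qq a) := by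
      calc |f x| - Rq - S3 = ∫ _a in (0:ℝ)..1, (|f x| - Rq - S3) := by simp
        _ ≤ _ := intervalIntegral.integral_mono_on zero_le_one
            intervalIntegrable_const ((hPc.add hQc).intervalIntegrable _ _) h2
    rw [intervalIntegral.integral_add (hPc.intervalIntegrable _ _)
      (hQc.intervalIntegrable _ _)] at h1
    linarith
  -- the four square_bound applications
  have hB0 : (∫ a in (0:ℝ)..1, Pq a)
      ≤ 13 / jap t * Real.sqrt (∫ y : E2, (jap (t - ‖y‖) * f y) ^ 2) := by
    have := square_bound ht (chi x) (chi_preserving x) hχc hnormχ f hfc hi0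
    simp only [hχψ] at this
    exact this
  have hB1 : (∫ a in (0:ℝ)..1, Qq a)
      ≤ 13 / jap t * Real.sqrt (∫ y : E2, (jap (t - ‖y‖) * pderiv2 1 f y) ^ 2) := by
    have := square_bound ht (chi x) (chi_preserving x) hχc hnormχ (pderiv2 1 f) hp1c (hi1 1)
    simp only [hχψ] at this
    calc (∫ a in (0:ℝ)..1, Qq a)
        = ∫ s in (0:ℝ)..1, ∫ u in (0:ℝ)..1, |pderiv2 1 f (ψ s u)| := by
          simp only [hQdef, hD1abs]
      _ ≤ _ := this
  -- swapped equiv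
  set κ2 : ℝ × ℝ ≃ᵐ E2 := (MeasurableEquiv.prodComm : ℝ × ℝ ≃ᵐ ℝ × ℝ).trans (chi x) with hκ2def
  have hκ2ψ : ∀ s u : ℝ, (κ2 (s, u) : E2) = ψ u s := by
    intro s u
    show (chi x (u, s) : E2) = ψ u s
    exact hχψ u s
  have hκ2pres : MeasurePreserving κ2 (volume : Measure (ℝ × ℝ)) (volume : Measure E2) := by
    have hsw : MeasurePreserving (Prod.swap : ℝ × ℝ → ℝ × ℝ) volume volume := by
      rw [Measure.volume_eq_prod]
      exact Measure.measurePreserving_swap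
    have := (chi_preserving x).comp hsw
    exact this
  have hκ2c : Continuous fun p : ℝ × ℝ => (κ2 p : E2) := by
    have : (fun p : ℝ × ℝ => (κ2 p : E2)) = fun p : ℝ × ℝ => (chi x p.swap : E2) := rfl
    rw [this]
    exact hχc.comp continuous_swap
  have hκ2n : ∀ p : ℝ × ℝ, p.1 ∈ Set.Icc (0:ℝ) 1 → p.2 ∈ Set.Icc (0:ℝ) 1 →
      ‖(κ2 p : E2)‖ ≤ jap (t/2) + 2 := by
    intro p h1 h2
    have : (κ2 p : E2) = ψ p.2 p.1 := hκ2ψ p.1 p.2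
    rw [this]
    exact hnorm _ _ h2 h1
  have hB2 : Rq ≤ 13 / jap t * Real.sqrt (∫ y : E2, (jap (t - ‖y‖) * pderiv2 0 f y) ^ 2) := by
    have := square_bound ht κ2 hκ2pres hκ2c hκ2n (pderiv2 0 f) hp0c (hi1 0)
    simp only [hκ2ψ] at this
    calc Rq = ∫ s in (0:ℝ)..1, ∫ u in (0:ℝ)..1, |pderiv2 0 f (ψ u s)| := by
          simp only [hRdef, hg1abs]
      _ ≤ _ := this
  have hB3 : S3 ≤ 13 / jap t
      * Real.sqrt (∫ y : E2, (jap (t - ‖y‖) * pderiv2 1 (pderiv2 0 f) y) ^ 2) := by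
    have := square_bound ht (chi x) (chi_preserving x) hχc hnormχ
      (pderiv2 1 (pderiv2 0 f)) hp10c (hi2 1 0)
    simp only [hχψ] at this
    calc S3 = ∫ s in (0:ℝ)..1, ∫ u in (0:ℝ)..1, |pderiv2 1 (pderiv2 0 f) (ψ s u)| := by
          simp only [hS3def, hF2eq]
      _ ≤ _ := this
  -- assemble
  set A0 := Real.sqrt (∫ y : E2, (jap (t - ‖y‖) * f y) ^ 2) with hA0
  set A10 := Real.sqrt (∫ y : E2, (jap (t - ‖y‖) * pderiv2 1 f y) ^ 2) with hA10
  set A00 := Real.sqrt (∫ y : E2, (jap (t - ‖y‖) * pderiv2 0 f y) ^ 2) with hA00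
  set B10 := Real.sqrt (∫ y : E2, (jap (t - ‖y‖) * pderiv2 1 (pderiv2 0 f) y) ^ 2) with hB10
  have hsum : |f x| ≤ 13 / jap t * (A0 + A10 + A00 + B10) := by
    have := avga
    have h := add_le_add (add_le_add (add_le_add hB0 hB1) hB2) hB3
    calc |f x| ≤ (∫ a in (0:ℝ)..1, Pq a) + (∫ a in (0:ℝ)..1, Qq a) + Rq + S3 := avga
      _ ≤ 13 / jap t * A0 + 13 / jap t * A10 + 13 / jap t * A00 + 13 / jap t * B10 := h
      _ = 13 / jap t * (A0 + A10 + A00 + B10) := by ring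
  have hjt := jap_pos t
  have hmul : jap t * |f x| ≤ 13 * (A0 + A10 + A00 + B10) := by
    have := mul_le_mul_of_nonneg_left hsum hjt.le
    calc jap t * |f x| ≤ jap t * (13 / jap t * (A0 + A10 + A00 + B10)) := this
      _ = 13 * (A0 + A10 + A00 + B10) := by field_simp
  -- compare with the full sums
  have e1 : (∑ i : Fin 2, Real.sqrt (∫ y : E2, (jap (t - ‖y‖) * pderiv2 i f y) ^ 2))
      = A00 + A10 := by
    rw [Fin.sum_univ_two]
  have e2 : (∑ i : Fin 2, ∑ j : Fin 2, Real.sqrt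
      (∫ y : E2, (jap (t - ‖y‖) * pderiv2 i (pderiv2 j f) y) ^ 2))
      = (Real.sqrt (∫ y : E2, (jap (t - ‖y‖) * pderiv2 0 (pderiv2 0 f) y) ^ 2)
        + Real.sqrt (∫ y : E2, (jap (t - ‖y‖) * pderiv2 0 (pderiv2 1 f) y) ^ 2))
        + (B10 + Real.sqrt (∫ y : E2, (jap (t - ‖y‖) * pderiv2 1 (pderiv2 1 f) y) ^ 2)) := by
    rw [Fin.sum_univ_two, Fin.sum_univ_two, Fin.sum_univ_two]
  rw [e1, e2]
  have n1 : 0 ≤ Real.sqrt (∫ y : E2, (jap (t - ‖y‖) * pderiv2 0 (pderiv2 0 f) y) ^ 2) :=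
    Real.sqrt_nonneg _
  have n2 : 0 ≤ Real.sqrt (∫ y : E2, (jap (t - ‖y‖) * pderiv2 0 (pderiv2 1 f) y) ^ 2) :=
    Real.sqrt_nonneg _
  have n3 : 0 ≤ Real.sqrt (∫ y : E2, (jap (t - ‖y‖) * pderiv2 1 (pderiv2 1 f) y) ^ 2) :=
    Real.sqrt_nonneg _
  linarith
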